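/- Let L be a digit string admitting an infinite sequence of CVs. Then there exists an index N such that for all n ≥ N the height of CV_n(L) is at most 5. -/

import Mathlib

/-- A digit string is a nonempty finite list of natural numbers, each at most 9,
read most-significant-first. -/
def DigitString (L : List ℕ) : Prop := L ≠ [] ∧ ∀ d ∈ L, d ≤ 9

/-- The curriculum vitae of `L`: the digit string of length `m + 1`, where `m` is the
largest entry of `L`, whose `i`-th entry (0-indexed) counts the occurrences of `i` in `L`. -/
def CV (L : List ℕ) : List ℕ :=
  (List.range (L.foldr max 0 + 1)).map (fun i => L.count i)

/-- The sequence of CVs of `L`: `CVseq L 0 = L` and `CVseq L (n+1) = CV (CVseq L n)`. -/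
def CVseq (L : List ℕ) : ℕ → List ℕ
  | 0 => L
  | n + 1 => CV (CVseq L n)

/-- `L` admits an infinite sequence of CVs: for every `n`, each value occurs at most
9 times in `CVseq L n` (so the next CV is defined). -/
def AdmitsCVs (L : List ℕ) : Prop := ∀ n, ∀ d, (CVseq L n).count d ≤ 9

/-- The complete life story of `L`: the digit string of length 10 whose `i`-th entry
(0-indexed, `0 ≤ i ≤ 9`) counts the occurrences of `i` in `L`. -/
def CLS (L : List ℕ) : List ℕ := (List.range 10).map (fun i => L.count i)

/-- The sequence of life stories of `L`. -/
def CLSseq (L : List ℕ) : ℕ → List ℕ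
  | 0 => L
  | n + 1 => CLS (CLSseq L n)

/-- `L` admits an infinite sequence of life stories: for every `n`, each value occurs
at most 9 times in `CLSseq L n`. -/
def AdmitsCLSs (L : List ℕ) : Prop := ∀ n, ∀ d, (CLSseq L n).count d ≤ 9

/-- The height of a digit string: the maximum of (its largest entry plus 1) and its length. -/
def height (L : List ℕ) : ℕ := max (L.foldr max 0 + 1) L.length

namespace CVProof

def maxL (L : List ℕ) : ℕ := L.foldr max 0

def wsum : ℕ → List ℕ → ℕ
  | _, [] => 0
  | i, d :: t => i * d + wsum (i + 1) t

def enc : List ℕ → ℕ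
  | [] => 0
  | d :: t => d + 1 + 16 * enc t

def dec : ℕ → ℕ → List ℕ
  | 0, _ => []
  | fuel + 1, n => if n = 0 then [] else (n % 16 - 1) :: dec fuel (n / 16)

lemma dec_enc : ∀ (L : List ℕ) (fuel : ℕ), L.length ≤ fuel → (∀ d ∈ L, d ≤ 9) →
    dec fuel (enc L) = L := by
  intro L
  induction L with
  | nil => intro fuel _ _; cases fuel <;> simp [dec, enc]
  | cons d t ih =>
    intro fuel hlen h9
    cases fuel with
    | zero => simp at hlen
    | succ fuel =>
      have hd : d ≤ 9 := h9 d (by simp)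
      have h1 : enc (d :: t) = d + 1 + 16 * enc t := rfl
      have hne : enc (d :: t) ≠ 0 := by omega
      have hmod : enc (d :: t) % 16 = d + 1 := by omega
      have hdiv : enc (d :: t) / 16 = enc t := by omega
      simp only [dec, if_neg hne, hmod, hdiv]
      rw [ih fuel (by simpa using hlen) (fun x hx => h9 x (by simp [hx]))]
      simp

inductive NTree where
  | leaf : NTree
  | node : NTree → ℕ → ℕ → NTree → NTree

def lk : NTree → ℕ → ℕ
  | .leaf, _ => 100
  | .node l k v r, n => if n < k then lk l n else if n = k then v else lk r n

def allT : NTree → (ℕ → ℕ → Bool) → Bool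
  | .leaf, _ => true
  | .node l k v r, P => P k v && allT l P && allT r P

lemma lk_sound (P : ℕ → ℕ → Bool) : ∀ t : NTree, allT t P = true →
    ∀ n, lk t n ≠ 100 → P n (lk t n) = true := by
  intro t
  induction t with
  | leaf => intro _ n hn; simp [lk] at hn
  | node l k v r ihl ihr =>
    intro hall n hn
    rw [allT, Bool.and_eq_true, Bool.and_eq_true] at hall
    obtain ⟨⟨hPk, hl⟩, hr⟩ := hall
    by_cases h1 : n < k
    · rw [lk, if_pos h1] at hn ⊢; exact ihl hl n hn
    · by_cases h2 : n = k
      · rw [lk, if_neg h1, if_pos h2] at hn ⊢; subst h2; exact hPk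
      · rw [lk, if_neg h1, if_neg h2] at hn ⊢; exact ihr hr n hn

lemma le_maxL {L : List ℕ} {d : ℕ} (h : d ∈ L) : d ≤ maxL L := by
  induction L with
  | nil => simp at h
  | cons a t ih =>
    rcases List.mem_cons.1 h with rfl | h
    · exact le_max_left _ _
    · exact le_trans (ih h) (le_max_right _ _)

lemma maxL_mem {L : List ℕ} (h : L ≠ []) : maxL L ∈ L := by
  induction L with
  | nil => simp at h
  | cons a t ih =>
    rcases eq_or_ne t [] with rfl | ht
    · simp [maxL]
    · rcases le_total a (maxL t) with hle | hle
      · have : maxL (a :: t) = maxL t := by simp [maxL, maxL] at hle ⊢; omega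
        rw [this]; exact List.mem_cons_of_mem _ (ih ht)
      · have : maxL (a :: t) = a := by simp [maxL] at hle ⊢; omega
        rw [this]; exact List.mem_cons_self

lemma maxL_le {L : List ℕ} (h : ∀ d ∈ L, d ≤ 9) : maxL L ≤ 9 := by
  induction L with
  | nil => simp [maxL]
  | cons a t ih =>
    have := h a (by simp)
    have := ih (fun d hd => h d (by simp [hd]))
    simp [maxL] at *; omega

lemma CV_ne (L : List ℕ) : CV L ≠ [] := by
  simp [CV, List.range_succ]

lemma CV_length (L : List ℕ) : (CV L).length = maxL L + 1 := by
  simp [CV, maxL]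

lemma mem_CV {L : List ℕ} {d : ℕ} (h : d ∈ CV L) : ∃ i, L.count i = d := by
  rw [CV] at h
  obtain ⟨i, _, hi⟩ := List.mem_map.1 h
  exact ⟨i, hi⟩

lemma listsum_range (f : ℕ → ℕ) (n : ℕ) :
    ((List.range n).map f).sum = ∑ i ∈ Finset.range n, f i := by
  induction n with
  | zero => simp
  | succ n ih =>
    rw [List.range_succ, List.map_append, List.sum_append, Finset.sum_range_succ, ih]
    simp

lemma wsum_append (l : List ℕ) (x : ℕ) : ∀ i, wsum i (l ++ [x]) = wsum i l + (i + l.length) * x := by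
  induction l with
  | nil => intro i; simp [wsum]
  | cons a t ih =>
    intro i
    rw [List.cons_append, wsum, wsum, ih (i + 1), List.length_cons]
    ring

lemma wsum_range (f : ℕ → ℕ) (n : ℕ) :
    wsum 0 ((List.range n).map f) = ∑ i ∈ Finset.range n, i * f i := by
  induction n with
  | zero => simp [wsum]
  | succ n ih =>
    rw [List.range_succ, List.map_append, List.map_cons, List.map_nil, wsum_append,
      Finset.sum_range_succ, ih]
    simp

lemma count_sum_range {L : List ℕ} {n : ℕ} (h : ∀ d ∈ L, d < n) :
    ∑ i ∈ Finset.range n, L.count i = L.length := by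
  induction L with
  | nil => simp
  | cons a t ih =>
    have ha : a ∈ Finset.range n := Finset.mem_range.2 (h a (by simp))
    have : ∀ i, (a :: t).count i = t.count i + if a = i then 1 else 0 := by
      intro i; rw [List.count_cons]; simp [beq_iff_eq]
    simp only [this]
    rw [Finset.sum_add_distrib, ih (fun d hd => h d (by simp [hd])), Finset.sum_ite_eq,
      if_pos ha, List.length_cons]

lemma wcount_sum_range {L : List ℕ} {n : ℕ} (h : ∀ d ∈ L, d < n) :
    ∑ i ∈ Finset.range n, i * L.count i = L.sum := by
  induction L with
  | nil => simp
  | cons a t ih =>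
    have ha : a ∈ Finset.range n := Finset.mem_range.2 (h a (by simp))
    have : ∀ i, i * (a :: t).count i = i * t.count i + if a = i then a else 0 := by
      intro i; rw [List.count_cons]; simp [beq_iff_eq, Nat.mul_add]
      split <;> simp_all
    simp only [this]
    rw [Finset.sum_add_distrib, ih (fun d hd => h d (by simp [hd])), Finset.sum_ite_eq,
      if_pos ha, List.sum_cons]
    omega

lemma CV_sum (L : List ℕ) : (CV L).sum = L.length := by
  rw [CV, listsum_range]
  exact count_sum_range (fun d hd => Nat.lt_succ_of_le (le_maxL hd))

lemma CV_wsum (L : List ℕ) : wsum 0 (CV L) = L.sum := by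
  rw [CV, wsum_range]
  exact wcount_sum_range (fun d hd => Nat.lt_succ_of_le (le_maxL hd))

lemma CV_lastD (L : List ℕ) : (CV L).getLastD 0 = L.count (maxL L) := by
  rw [CV, maxL, List.range_succ, List.map_append, List.map_cons, List.map_nil,
    List.getLastD_concat]

def enum : ℕ → ℕ → ℕ → ℕ → List (List ℕ)
  | _, 0, _, _ => [[]]
  | i, n + 1, s, w =>
    (List.range 10).flatMap fun d =>
      if d ≤ s ∧ i * d ≤ w then (enum (i + 1) n (s - d) (w - i * d)).map (d :: ·) else []

lemma mem_enum : ∀ (L : List ℕ) (i s w : ℕ), (∀ d ∈ L, d ≤ 9) → L.sum ≤ s → wsum i L ≤ w →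
    L ∈ enum i L.length s w := by
  intro L
  induction L with
  | nil => intros; simp [enum]
  | cons d t ih =>
    intro i s w h9 hs hw
    rw [List.sum_cons] at hs
    rw [wsum] at hw
    show _ ∈ enum i (t.length + 1) s w
    rw [enum, List.mem_flatMap]
    refine ⟨d, List.mem_range.2 (by have := h9 d (by simp); omega), ?_⟩
    rw [if_pos ⟨by omega, by omega⟩, List.mem_map]
    exact ⟨t, ih (i + 1) (s - d) (w - i * d) (fun x hx => h9 x (by simp [hx]))
      (by omega) (by omega), rfl⟩

def T : NTree := (.node (.node (.node (.node (.node (.node (.node (.node (.node (.node .leaf 2 0 .leaf) 3 0 (.node .leaf 4 0 .leaf)) 5 0 (.node (.node .leaf 6 4 .leaf) 7 6 (.node .leaf 8 8 .leaf))) 9 10 (.node (.node (.node .leaf 10 12 .leaf) 33 0 (.node .leaf 34 0 .leaf)) 35 0 (.node (.node .leaf 36 0 .leaf) 37 0 (.node .leaf 38 2 .leaf)))) 39 4 (.node (.node (.node (.node .leaf 40 6 .leaf) 41 8 (.node .leaf 42 10 .leaf)) 49 0 (.node (.node .leaf 50 0 .leaf) 51 0 (.node .leaf 52 0 .leaf)))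 53 0 (.node (.node (.node .leaf 54 2 .leaf) 55 4 (.node .leaf 56 6 .leaf)) 57 8 (.node (.node .leaf 65 0 .leaf) 66 0 .leaf)))) 67 0 (.node (.node (.node (.node (.node .leaf 68 0 .leaf) 69 0 (.node .leaf 70 2 .leaf)) 71 4 (.node (.node .leaf 72 6 .leaf) 81 0 (.node .leaf 82 0 .leaf))) 83 0 (.node (.node (.node .leaf 84 0 .leaf) 85 0 (.node .leaf 86 2 .leaf)) 87 4 (.node (.node .leaf 97 2 .leaf) 98 2 (.node .leaf 99 2 .leaf)))) 100 2 (.node (.node (.node (.node .leaf 101 2 .leaf) 102 4 (.node .leaf 113 4 .leaf)) 114 4 (.node (.node .leaf 115 4 .leaf) 116 4 (.node .leaf 117 4 .leaf))) 129 6 (.node (.node (.node .leaf 130 6 .leaf) 131 6 (.node .leaf 132 6 .leaf)) 145 8 (.node (.node .leaf 146 8 .leaf) 147 8 .leaf))))) 161 10 (.node (.node (.node (.node (.node (.node .leaf 162 10 .leaf) 529 0 (.node .leaf 530 0 .leaf)) 531 0 (.node (.node .leaf 532 0 .leaf) 533 0 (.node .leaf 534 2 .leaf))) 535 2 (.node (.node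 (.node .leaf 536 4 .leaf) 537 6 (.node .leaf 538 8 .leaf)) 545 0 (.node (.node .leaf 546 0 .leaf) 547 0 (.node .leaf 548 0 .leaf)))) 549 0 (.node (.node (.node (.node .leaf 550 2 .leaf) 551 4 (.node .leaf 552 6 .leaf)) 553 8 (.node (.node .leaf 561 0 .leaf) 562 0 (.node .leaf 563 0 .leaf))) 564 0 (.node (.node (.node .leaf 565 0 .leaf) 566 2 (.node .leaf 567 2 .leaf)) 568 4 (.node (.node .leaf 577 0 .leaf) 578 0 .leaf)))) 579 0 (.node (.node (.node (.node (.node .leaf 580 0 .leaf) 581 0 (.node .leaf 582 2 .leaf)) 583 2 (.node (.node .leaf 593 0 .leaf) 594 0 (.node .leaf 595 0 .leaf))) 596 0 (.node (.node (.node .leaf 597 0 .leaf) 598 2 (.node .leaf 609 2 .leaf)) 610 2 (.node (.node .leaf 611 2 .leaf) 612 2 .leaf))) 613 2 (.node (.node (.node (.node .leaf 625 2 .leaf) 626 4 (.node .leaf 627 2 .leaf)) 628 2 (.node (.node .leaf 641 4 .leaf) 642 6 (.node .leaf 643 4 .leaf))) 657 6 (.node (.node (.node .leaf 658 8 .leaf)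 785 0 (.node .leaf 786 0 .leaf)) 787 0 (.node (.node .leaf 788 0 .leaf) 789 0 .leaf)))))) 790 2 (.node (.node (.node (.node (.node (.node (.node .leaf 791 2 .leaf) 792 4 (.node .leaf 793 6 .leaf)) 801 0 (.node (.node .leaf 802 0 .leaf) 803 0 (.node .leaf 804 0 .leaf))) 805 0 (.node (.node (.node .leaf 806 2 .leaf) 807 2 (.node .leaf 808 4 .leaf)) 817 0 (.node (.node .leaf 818 0 .leaf) 819 0 (.node .leaf 820 0 .leaf)))) 821 0 (.node (.node (.node (.node .leaf 822 2 .leaf) 823 4 (.node .leaf 833 0 .leaf)) 834 0 (.node (.node .leaf 835 0 .leaf) 836 0 (.node .leaf 837 0 .leaf))) 838 2 (.node (.node (.node .leaf 849 0 .leaf) 850 0 (.node .leaf 851 0 .leaf)) 852 0 (.node (.node .leaf 853 0 .leaf) 865 2 .leaf)))) 866 2 (.node (.node (.node (.node (.node .leaf 867 2 .leaf) 868 2 (.node .leaf 881 2 .leaf)) 882 2 (.node (.node .leaf 883 4 .leaf) 1041 0 (.node .leaf 1042 0 .leaf))) 1043 0 (.node (.node (.node .leaf 1044 0 .leaf) 1045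 0 (.node .leaf 1046 2 .leaf)) 1047 2 (.node (.node .leaf 1048 4 .leaf) 1057 0 .leaf))) 1058 0 (.node (.node (.node (.node .leaf 1059 0 .leaf) 1060 0 (.node .leaf 1061 0 .leaf)) 1062 2 (.node (.node .leaf 1063 2 .leaf) 1073 0 (.node .leaf 1074 0 .leaf))) 1075 0 (.node (.node (.node .leaf 1076 0 .leaf) 1077 0 (.node .leaf 1078 2 .leaf)) 1089 0 (.node (.node .leaf 1090 0 .leaf) 1091 0 .leaf))))) 1092 0 (.node (.node (.node (.node (.node (.node .leaf 1093 0 .leaf) 1105 0 (.node .leaf 1106 0 .leaf)) 1107 0 (.node (.node .leaf 1108 0 .leaf) 1297 0 (.node .leaf 1298 0 .leaf))) 1299 0 (.node (.node (.node .leaf 1300 0 .leaf) 1301 0 (.node .leaf 1302 2 .leaf)) 1303 2 (.node (.node .leaf 1313 0 .leaf) 1314 0 (.node .leaf 1315 0 .leaf)))) 1316 0 (.node (.node (.node (.node .leaf 1317 0 .leaf) 1318 2 (.node .leaf 1329 0 .leaf)) 1330 0 (.node (.node .leaf 1331 0 .leaf) 1332 0 (.node .leaf 1333 0 .leaf)))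 1553 2 (.node (.node (.node .leaf 1554 2 .leaf) 1555 2 (.node .leaf 1556 2 .leaf)) 1557 2 (.node (.node .leaf 1558 2 .leaf) 8465 0 .leaf)))) 8466 0 (.node (.node (.node (.node (.node .leaf 8467 0 .leaf) 8468 0 (.node .leaf 8469 0 .leaf)) 8470 2 (.node (.node .leaf 8471 2 .leaf) 8472 4 (.node .leaf 8473 4 .leaf))) 8474 6 (.node (.node (.node .leaf 8481 0 .leaf) 8482 0 (.node .leaf 8483 0 .leaf)) 8484 0 (.node (.node .leaf 8485 0 .leaf) 8486 2 .leaf))) 8487 2 (.node (.node (.node (.node .leaf 8488 4 .leaf) 8489 4 (.node .leaf 8497 0 .leaf)) 8498 0 (.node (.node .leaf 8499 0 .leaf) 8500 0 (.node .leaf 8501 0 .leaf))) 8502 2 (.node (.node (.node .leaf 8503 2 .leaf) 8504 2 (.node .leaf 8513 0 .leaf)) 8514 0 (.node (.node .leaf 8515 0 .leaf) 8516 0 .leaf))))))) 8517 0 (.node (.node (.node (.node (.node (.node (.node (.node .leaf 8518 2 .leaf) 8519 2 (.node .leaf 8529 0 .leaf)) 8530 0 (.node (.node .leaf 8531 0 .leaf)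 8532 0 (.node .leaf 8533 0 .leaf))) 8534 2 (.node (.node (.node .leaf 8545 2 .leaf) 8546 2 (.node .leaf 8547 2 .leaf)) 8548 2 (.node (.node .leaf 8549 2 .leaf) 8561 2 (.node .leaf 8562 2 .leaf)))) 8563 2 (.node (.node (.node (.node .leaf 8564 2 .leaf) 8577 4 (.node .leaf 8578 4 .leaf)) 8579 2 (.node (.node .leaf 8721 0 .leaf) 8722 0 (.node .leaf 8723 0 .leaf))) 8724 0 (.node (.node (.node .leaf 8725 0 .leaf) 8726 2 (.node .leaf 8727 2 .leaf)) 8728 4 (.node (.node .leaf 8729 4 .leaf) 8737 0 .leaf)))) 8738 0 (.node (.node (.node (.node (.node .leaf 8739 0 .leaf) 8740 0 (.node .leaf 8741 0 .leaf)) 8742 2 (.node (.node .leaf 8743 4 .leaf) 8744 4 (.node .leaf 8753 0 .leaf))) 8754 0 (.node (.node (.node .leaf 8755 0 .leaf) 8756 0 (.node .leaf 8757 0 .leaf)) 8758 2 (.node (.node .leaf 8759 2 .leaf) 8769 0 (.node .leaf 8770 0 .leaf)))) 8771 0 (.node (.node (.node (.node .leaf 8772 0 .leaf) 8773 0 (.node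 .leaf 8774 2 .leaf)) 8785 0 (.node (.node .leaf 8786 0 .leaf) 8787 0 (.node .leaf 8788 0 .leaf))) 8789 0 (.node (.node (.node .leaf 8801 2 .leaf) 8802 2 (.node .leaf 8803 2 .leaf)) 8804 2 (.node (.node .leaf 8977 0 .leaf) 8978 0 .leaf))))) 8979 0 (.node (.node (.node (.node (.node (.node .leaf 8980 0 .leaf) 8981 0 (.node .leaf 8982 2 .leaf)) 8983 2 (.node (.node .leaf 8984 2 .leaf) 8993 0 (.node .leaf 8994 0 .leaf))) 8995 0 (.node (.node (.node .leaf 8996 0 .leaf) 8997 0 (.node .leaf 8998 2 .leaf)) 8999 2 (.node (.node .leaf 9009 0 .leaf) 9010 0 (.node .leaf 9011 0 .leaf)))) 9012 0 (.node (.node (.node (.node .leaf 9013 0 .leaf) 9014 2 (.node .leaf 9025 0 .leaf)) 9026 0 (.node (.node .leaf 9027 0 .leaf) 9028 0 (.node .leaf 9029 0 .leaf))) 9233 0 (.node (.node (.node .leaf 9234 0 .leaf) 9235 0 (.node .leaf 9236 0 .leaf)) 9237 0 (.node (.node .leaf 9238 2 .leaf) 9239 2 .leaf)))) 9249 0 (.node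 (.node (.node (.node (.node .leaf 9250 0 .leaf) 9251 0 (.node .leaf 9252 0 .leaf)) 9253 0 (.node (.node .leaf 9254 2 .leaf) 12561 0 (.node .leaf 12562 0 .leaf))) 12563 0 (.node (.node (.node .leaf 12564 0 .leaf) 12565 0 (.node .leaf 12566 2 .leaf)) 12567 2 (.node (.node .leaf 12568 4 .leaf) 12569 4 .leaf))) 12577 0 (.node (.node (.node (.node .leaf 12578 0 .leaf) 12579 0 (.node .leaf 12580 0 .leaf)) 12581 0 (.node (.node .leaf 12582 2 .leaf) 12583 2 (.node .leaf 12584 2 .leaf))) 12593 0 (.node (.node (.node .leaf 12594 0 .leaf) 12595 0 (.node .leaf 12596 0 .leaf)) 12597 0 (.node (.node .leaf 12598 2 .leaf) 12599 2 .leaf)))))) 12609 0 (.node (.node (.node (.node (.node (.node (.node .leaf 12610 0 .leaf) 12611 0 (.node .leaf 12612 0 .leaf)) 12613 0 (.node (.node .leaf 12614 2 .leaf) 12625 0 (.node .leaf 12626 0 .leaf))) 12627 0 (.node (.node (.node .leaf 12628 0 .leaf) 12629 0 (.node .leaf 12817 0 .leaf)) 12818 0 (.node (.node .leaf 12819 0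 .leaf) 12820 0 (.node .leaf 12821 0 .leaf)))) 12822 2 (.node (.node (.node (.node .leaf 12823 2 .leaf) 12824 2 (.node .leaf 12833 0 .leaf)) 12834 0 (.node (.node .leaf 12835 0 .leaf) 12836 0 (.node .leaf 12837 0 .leaf))) 12838 2 (.node (.node (.node .leaf 12839 2 .leaf) 12849 0 (.node .leaf 12850 0 .leaf)) 12851 0 (.node (.node .leaf 12852 0 .leaf) 12853 0 .leaf)))) 12854 2 (.node (.node (.node (.node (.node .leaf 13073 0 .leaf) 13074 0 (.node .leaf 13075 0 .leaf)) 13076 0 (.node (.node .leaf 13077 0 .leaf) 13078 2 (.node .leaf 13079 2 .leaf))) 16657 0 (.node (.node (.node .leaf 16658 0 .leaf) 16659 0 (.node .leaf 16660 0 .leaf)) 16661 0 (.node (.node .leaf 16662 2 .leaf) 16663 2 .leaf))) 16664 4 (.node (.node (.node (.node .leaf 16673 0 .leaf) 16674 0 (.node .leaf 16675 0 .leaf)) 16676 0 (.node (.node .leaf 16677 0 .leaf) 16678 2 (.node .leaf 16679 2 .leaf))) 135441 0 (.node (.node (.node .leaf 135442 0 .leaf) 135443 0 (.node .leaf 135444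 0 .leaf)) 135445 0 (.node (.node .leaf 135446 2 .leaf) 135447 2 .leaf))))) 135448 4 (.node (.node (.node (.node (.node (.node .leaf 135449 4 .leaf) 135450 4 (.node .leaf 135457 0 .leaf)) 135458 0 (.node (.node .leaf 135459 0 .leaf) 135460 0 (.node .leaf 135461 0 .leaf))) 135462 2 (.node (.node (.node .leaf 135463 2 .leaf) 135464 4 (.node .leaf 135465 4 .leaf)) 135473 0 (.node (.node .leaf 135474 0 .leaf) 135475 0 (.node .leaf 135476 0 .leaf)))) 135477 0 (.node (.node (.node (.node .leaf 135478 2 .leaf) 135479 2 (.node .leaf 135480 2 .leaf)) 135489 0 (.node (.node .leaf 135490 0 .leaf) 135491 0 (.node .leaf 135492 0 .leaf))) 135493 0 (.node (.node (.node .leaf 135494 2 .leaf) 135495 2 (.node .leaf 135505 0 .leaf)) 135506 0 (.node (.node .leaf 135507 0 .leaf) 135508 0 .leaf)))) 135509 0 (.node (.node (.node (.node (.node .leaf 135510 2 .leaf) 135521 2 (.node .leaf 135522 2 .leaf)) 135523 2 (.node (.node .leaf 135524 2 .leaf) 135525 2 (.node .leaf 135537 2 .leaf))) 135538 2 (.node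 (.node (.node .leaf 135539 2 .leaf) 135540 2 (.node .leaf 135697 0 .leaf)) 135698 0 (.node (.node .leaf 135699 0 .leaf) 135700 0 .leaf))) 135701 0 (.node (.node (.node (.node .leaf 135702 2 .leaf) 135703 2 (.node .leaf 135704 4 .leaf)) 135705 4 (.node (.node .leaf 135713 0 .leaf) 135714 0 (.node .leaf 135715 0 .leaf))) 135716 0 (.node (.node (.node .leaf 135717 0 .leaf) 135718 2 (.node .leaf 135719 2 .leaf)) 135720 4 (.node (.node .leaf 135729 0 .leaf) 135730 0 .leaf)))))))) 135731 0 (.node (.node (.node (.node (.node (.node (.node (.node (.node .leaf 135732 0 .leaf) 135733 0 (.node .leaf 135734 2 .leaf)) 135735 2 (.node (.node .leaf 135745 0 .leaf) 135746 0 (.node .leaf 135747 0 .leaf))) 135748 0 (.node (.node (.node .leaf 135749 0 .leaf) 135750 2 (.node .leaf 135761 0 .leaf)) 135762 0 (.node (.node .leaf 135763 0 .leaf) 135764 0 (.node .leaf 135765 0 .leaf)))) 135953 0 (.node (.node (.node (.node .leaf 135954 0 .leaf) 135955 0 (.node .leaf 135956 0 .leaf)) 135957 0 (.node (.node .leaf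 135958 2 .leaf) 135959 2 (.node .leaf 135960 2 .leaf))) 135969 0 (.node (.node (.node .leaf 135970 0 .leaf) 135971 0 (.node .leaf 135972 0 .leaf)) 135973 0 (.node (.node .leaf 135974 2 .leaf) 135975 2 .leaf)))) 135985 0 (.node (.node (.node (.node (.node .leaf 135986 0 .leaf) 135987 0 (.node .leaf 135988 0 .leaf)) 135989 0 (.node (.node .leaf 135990 2 .leaf) 136209 0 (.node .leaf 136210 0 .leaf))) 136211 0 (.node (.node (.node .leaf 136212 0 .leaf) 136213 0 (.node .leaf 136214 2 .leaf)) 136215 2 (.node (.node .leaf 139537 0 .leaf) 139538 0 (.node .leaf 139539 0 .leaf)))) 139540 0 (.node (.node (.node (.node .leaf 139541 0 .leaf) 139542 2 (.node .leaf 139543 2 .leaf)) 139544 4 (.node (.node .leaf 139545 4 .leaf) 139553 0 (.node .leaf 139554 0 .leaf))) 139555 0 (.node (.node (.node .leaf 139556 0 .leaf) 139557 0 (.node .leaf 139558 2 .leaf)) 139559 2 (.node (.node .leaf 139560 4 .leaf) 139569 0 .leaf))))) 139570 0 (.node (.node (.node (.node (.node (.node .leaf 139571 0 .leaf) 139572 0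 (.node .leaf 139573 0 .leaf)) 139574 2 (.node (.node .leaf 139575 2 .leaf) 139585 0 (.node .leaf 139586 0 .leaf))) 139587 0 (.node (.node (.node .leaf 139588 0 .leaf) 139589 0 (.node .leaf 139590 2 .leaf)) 139793 0 (.node (.node .leaf 139794 0 .leaf) 139795 0 (.node .leaf 139796 0 .leaf)))) 139797 0 (.node (.node (.node (.node .leaf 139798 2 .leaf) 139799 2 (.node .leaf 139800 4 .leaf)) 139809 0 (.node (.node .leaf 139810 3 .leaf) 139811 0 (.node .leaf 139812 0 .leaf))) 139813 0 (.node (.node (.node .leaf 139814 2 .leaf) 139815 4 (.node .leaf 143633 0 .leaf)) 143634 0 (.node (.node .leaf 143635 0 .leaf) 143636 0 .leaf)))) 143637 0 (.node (.node (.node (.node (.node .leaf 143638 2 .leaf) 143639 2 (.node .leaf 143640 2 .leaf)) 200977 0 (.node (.node .leaf 200978 0 .leaf) 200979 0 (.node .leaf 200980 0 .leaf))) 200981 0 (.node (.node (.node .leaf 200982 2 .leaf) 200983 2 (.node .leaf 200984 4 .leaf)) 200985 4 (.node (.node .leaf 200993 0 .leaf) 200994 0 .leaf))) 200995 0 (.node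 (.node (.node (.node .leaf 200996 0 .leaf) 200997 0 (.node .leaf 200998 2 .leaf)) 200999 2 (.node (.node .leaf 201000 2 .leaf) 201009 0 (.node .leaf 201010 0 .leaf))) 201011 0 (.node (.node (.node .leaf 201012 0 .leaf) 201013 0 (.node .leaf 201014 2 .leaf)) 201015 2 (.node (.node .leaf 201233 0 .leaf) 201234 0 .leaf)))))) 201235 0 (.node (.node (.node (.node (.node (.node (.node .leaf 201236 0 .leaf) 201237 0 (.node .leaf 201238 2 .leaf)) 201239 2 (.node (.node .leaf 201240 2 .leaf) 2167057 3 (.node .leaf 2167058 1 .leaf))) 2167059 1 (.node (.node (.node .leaf 2167060 1 .leaf) 2167061 1 (.node .leaf 2167062 2 .leaf)) 2167063 2 (.node (.node .leaf 2167064 4 .leaf) 2167065 4 (.node .leaf 2167066 4 .leaf)))) 2167073 1 (.node (.node (.node (.node .leaf 2167074 1 .leaf) 2167075 1 (.node .leaf 2167076 1 .leaf)) 2167077 1 (.node (.node .leaf 2167078 2 .leaf) 2167079 2 (.node .leaf 2167080 4 .leaf))) 2167081 6 (.node (.node (.node .leaf 2167089 1 .leaf) 2167090 1 (.node .leaf 2167091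 1 .leaf)) 2167092 1 (.node (.node .leaf 2167093 1 .leaf) 2167094 2 .leaf)))) 2167095 2 (.node (.node (.node (.node (.node .leaf 2167096 2 .leaf) 2167105 1 (.node .leaf 2167106 1 .leaf)) 2167107 1 (.node (.node .leaf 2167108 1 .leaf) 2167109 1 (.node .leaf 2167110 2 .leaf))) 2167111 2 (.node (.node (.node .leaf 2167121 1 .leaf) 2167122 1 (.node .leaf 2167123 1 .leaf)) 2167124 1 (.node (.node .leaf 2167125 1 .leaf) 2167126 2 .leaf))) 2167137 2 (.node (.node (.node (.node .leaf 2167138 2 .leaf) 2167139 2 (.node .leaf 2167140 2 .leaf)) 2167141 2 (.node (.node .leaf 2167313 1 .leaf) 2167314 1 (.node .leaf 2167315 1 .leaf))) 2167316 1 (.node (.node (.node .leaf 2167317 1 .leaf) 2167318 2 (.node .leaf 2167319 2 .leaf)) 2167320 4 (.node (.node .leaf 2167321 6 .leaf) 2167329 1 .leaf))))) 2167330 1 (.node (.node (.node (.node (.node (.node .leaf 2167331 1 .leaf) 2167332 1 (.node .leaf 2167333 1 .leaf)) 2167334 2 (.node (.node .leaf 2167335 2 .leaf) 2167336 4 (.node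 .leaf 2167345 1 .leaf))) 2167346 1 (.node (.node (.node .leaf 2167347 1 .leaf) 2167348 1 (.node .leaf 2167349 1 .leaf)) 2167350 2 (.node (.node .leaf 2167351 2 .leaf) 2167361 1 (.node .leaf 2167362 1 .leaf)))) 2167363 1 (.node (.node (.node (.node .leaf 2167364 1 .leaf) 2167365 1 (.node .leaf 2167366 2 .leaf)) 2167569 1 (.node (.node .leaf 2167570 1 .leaf) 2167571 1 (.node .leaf 2167572 1 .leaf))) 2167573 1 (.node (.node (.node .leaf 2167574 2 .leaf) 2167575 2 (.node .leaf 2167576 2 .leaf)) 2167585 1 (.node (.node .leaf 2167586 1 .leaf) 2167587 1 .leaf)))) 2167588 1 (.node (.node (.node (.node (.node .leaf 2167589 1 .leaf) 2167590 2 (.node .leaf 2167591 2 .leaf)) 2171153 1 (.node (.node .leaf 2171154 1 .leaf) 2171155 1 (.node .leaf 2171156 1 .leaf))) 2171157 1 (.node (.node (.node .leaf 2171158 2 .leaf) 2171159 2 (.node .leaf 2171160 4 .leaf)) 2171161 6 (.node (.node .leaf 2171169 1 .leaf) 2171170 1 .leaf))) 2171171 1 (.node (.node (.node (.node .leaf 2171172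 1 .leaf) 2171173 1 (.node .leaf 2171174 2 .leaf)) 2171175 2 (.node (.node .leaf 2171176 4 .leaf) 2171185 1 (.node .leaf 2171186 1 .leaf))) 2171187 1 (.node (.node (.node .leaf 2171188 1 .leaf) 2171189 1 (.node .leaf 2171190 2 .leaf)) 2171191 2 (.node (.node .leaf 2171409 1 .leaf) 2171410 1 .leaf))))))) 2171411 1 (.node (.node (.node (.node (.node (.node (.node (.node .leaf 2171412 1 .leaf) 2171413 1 (.node .leaf 2171414 2 .leaf)) 2171415 2 (.node (.node .leaf 2171416 4 .leaf) 2232593 1 (.node .leaf 2232594 1 .leaf))) 2232595 1 (.node (.node (.node .leaf 2232596 1 .leaf) 2232597 1 (.node .leaf 2232598 2 .leaf)) 2232599 2 (.node (.node .leaf 2232600 4 .leaf) 2232601 6 (.node .leaf 2232609 1 .leaf)))) 2232610 1 (.node (.node (.node (.node .leaf 2232611 1 .leaf) 2232612 1 (.node .leaf 2232613 1 .leaf)) 2232614 2 (.node (.node .leaf 2232615 2 .leaf) 2232616 4 (.node .leaf 3215633 3 .leaf))) 3215634 1 (.node (.node (.node .leaf 3215635 1 .leaf) 3215636 1 (.node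 .leaf 3215637 1 .leaf)) 3215638 2 (.node (.node .leaf 3215639 2 .leaf) 3215640 4 .leaf)))) 3215641 4 (.node (.node (.node (.node (.node .leaf 34672913 5 .leaf) 34672914 3 (.node .leaf 34672915 3 .leaf)) 34672916 3 (.node (.node .leaf 34672917 3 .leaf) 34672918 3 (.node .leaf 34672919 3 .leaf))) 34672920 4 (.node (.node (.node .leaf 34672921 4 .leaf) 34672922 4 (.node .leaf 34672929 3 .leaf)) 34672930 1 (.node (.node .leaf 34672931 1 .leaf) 34672932 1 (.node .leaf 34672933 1 .leaf)))) 34672934 2 (.node (.node (.node (.node .leaf 34672935 2 .leaf) 34672936 4 (.node .leaf 34672937 4 .leaf)) 34672945 3 (.node (.node .leaf 34672946 1 .leaf) 34672947 1 (.node .leaf 34672948 1 .leaf))) 34672949 1 (.node (.node (.node .leaf 34672950 2 .leaf) 34672951 2 (.node .leaf 34672952 2 .leaf)) 34672961 3 (.node (.node .leaf 34672962 1 .leaf) 34672963 1 .leaf))))) 34672964 1 (.node (.node (.node (.node (.node (.node .leaf 34672965 1 .leaf) 34672966 2 (.node .leaf 34672967 2 .leaf)) 34672977 3 (.node (.node .leaf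 34672978 1 .leaf) 34672979 1 (.node .leaf 34672980 1 .leaf))) 34672981 1 (.node (.node (.node .leaf 34672982 2 .leaf) 34673169 3 (.node .leaf 34673170 1 .leaf)) 34673171 1 (.node (.node .leaf 34673172 1 .leaf) 34673173 1 (.node .leaf 34673174 2 .leaf)))) 34673175 2 (.node (.node (.node (.node .leaf 34673176 4 .leaf) 34673177 4 (.node .leaf 34673185 1 .leaf)) 34673186 1 (.node (.node .leaf 34673187 1 .leaf) 34673188 1 (.node .leaf 34673189 1 .leaf))) 34673190 2 (.node (.node (.node .leaf 34673191 2 .leaf) 34673192 4 (.node .leaf 34673201 1 .leaf)) 34673202 1 (.node (.node .leaf 34673203 1 .leaf) 34673204 1 .leaf)))) 34673205 1 (.node (.node (.node (.node (.node .leaf 34673206 2 .leaf) 34673207 2 (.node .leaf 34673425 3 .leaf)) 34673426 1 (.node (.node .leaf 34673427 1 .leaf) 34673428 1 (.node .leaf 34673429 1 .leaf))) 34673430 2 (.node (.node (.node .leaf 34673431 2 .leaf) 34673432 2 (.node .leaf 34677009 3 .leaf)) 34677010 1 (.node (.node .leaf 34677011 1 .leaf) 34677012 1 .leaf))) 34677013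 1 (.node (.node (.node (.node .leaf 34677014 2 .leaf) 34677015 2 (.node .leaf 34677016 4 .leaf)) 34677017 4 (.node (.node .leaf 34677025 1 .leaf) 34677026 1 (.node .leaf 34677027 1 .leaf))) 34677028 1 (.node (.node (.node .leaf 34677029 1 .leaf) 34677030 2 (.node .leaf 34677031 2 .leaf)) 34677032 4 (.node (.node .leaf 34738449 3 .leaf) 34738450 1 .leaf)))))) 34738451 1 (.node (.node (.node (.node (.node (.node (.node .leaf 34738452 1 .leaf) 34738453 1 (.node .leaf 34738454 2 .leaf)) 34738455 2 (.node (.node .leaf 34738456 4 .leaf) 34738457 4 (.node .leaf 554766609 7 .leaf))) 554766610 5 (.node (.node (.node .leaf 554766611 5 .leaf) 554766612 3 (.node .leaf 554766613 3 .leaf)) 554766614 3 (.node (.node .leaf 554766615 3 .leaf) 554766616 4 (.node .leaf 554766617 4 .leaf)))) 554766618 4 (.node (.node (.node (.node .leaf 554766625 5 .leaf) 554766626 3 (.node .leaf 554766627 3 .leaf)) 554766628 3 (.node (.node .leaf 554766629 3 .leaf) 554766630 3 (.node .leaf 554766631 3 .leaf))) 554766632 4 (.node (.node (.node .leaf 554766633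 4 .leaf) 554766641 5 (.node .leaf 554766642 3 .leaf)) 554766643 3 (.node (.node .leaf 554766644 3 .leaf) 554766645 3 .leaf)))) 554766646 3 (.node (.node (.node (.node (.node .leaf 554766647 3 .leaf) 554766648 3 (.node .leaf 554766657 3 .leaf)) 554766658 3 (.node (.node .leaf 554766659 3 .leaf) 554766660 3 (.node .leaf 554766661 3 .leaf))) 554766662 3 (.node (.node (.node .leaf 554766663 3 .leaf) 554766865 5 (.node .leaf 554766866 3 .leaf)) 554766867 3 (.node (.node .leaf 554766868 3 .leaf) 554766869 3 .leaf))) 554766870 3 (.node (.node (.node (.node .leaf 554766871 3 .leaf) 554766872 4 (.node .leaf 554766873 4 .leaf)) 554766881 3 (.node (.node .leaf 554766882 1 .leaf) 554766883 1 (.node .leaf 554766884 1 .leaf))) 554766885 1 (.node (.node (.node .leaf 554766886 2 .leaf) 554766887 2 (.node .leaf 554766888 4 .leaf)) 554770705 5 (.node (.node .leaf 554770706 3 .leaf) 554770707 3 .leaf))))) 554770708 3 (.node (.node (.node (.node (.node (.node .leaf 554770709 3 .leaf) 554770710 3 (.node .leaf 554770711 3 .leaf)) 554770712 4 (.node (.node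 .leaf 554770713 4 .leaf) 8876265745 9 (.node .leaf 8876265746 7 .leaf))) 8876265747 7 (.node (.node (.node .leaf 8876265748 5 .leaf) 8876265749 5 (.node .leaf 8876265750 5 .leaf)) 8876265751 5 (.node (.node .leaf 8876265752 5 .leaf) 8876265753 5 (.node .leaf 8876265754 5 .leaf)))) 8876265761 7 (.node (.node (.node (.node .leaf 8876265762 5 .leaf) 8876265763 3 (.node .leaf 8876265764 3 .leaf)) 8876265765 3 (.node (.node .leaf 8876265766 3 .leaf) 8876265767 3 (.node .leaf 8876265768 4 .leaf))) 8876265769 4 (.node (.node (.node .leaf 8876265777 7 .leaf) 8876265778 3 (.node .leaf 8876265779 3 .leaf)) 8876265780 5 (.node (.node .leaf 8876265781 3 .leaf) 8876265782 3 .leaf)))) 8876265783 3 (.node (.node (.node (.node (.node .leaf 8876265784 3 .leaf) 8876266001 7 (.node .leaf 8876266002 5 .leaf)) 8876266003 3 (.node (.node .leaf 8876266004 3 .leaf) 8876266005 3 (.node .leaf 8876266006 3 .leaf))) 8876266007 3 (.node (.node (.node .leaf 8876266008 4 .leaf) 8876266009 4 (.node .leaf 142020251921 11 .leaf)) 142020251922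 9 (.node (.node .leaf 142020251923 9 .leaf) 142020251924 5 .leaf))) 142020251925 5 (.node (.node (.node (.node .leaf 142020251926 7 .leaf) 142020251927 5 (.node .leaf 142020251928 5 .leaf)) 142020251929 5 (.node (.node .leaf 142020251930 5 .leaf) 142020251937 9 (.node .leaf 142020251938 7 .leaf))) 142020251939 5 (.node (.node (.node .leaf 142020251940 3 .leaf) 142020251941 3 (.node .leaf 142020251942 3 .leaf)) 142020251943 3 (.node (.node .leaf 142020251944 4 .leaf) 142020251945 4 .leaf)))))))))

def okA (M : List ℕ) : Bool := M.all (fun d => d ≤ 9)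

def P (k v : ℕ) : Bool :=
  let L := dec 12 k
  let M := CV L
  decide (v ≤ 90) &&
    (!(okA M) ||
      (if v = 0 then decide (height L ≤ 5) && decide (lk T (enc M) = 0)
       else decide (lk T (enc M) < v)))


def econd (L : List ℕ) : Bool := !(decide (1 ≤ L.getLastD 0)) || decide (lk T (enc L) ≠ 100)

def echk : ℕ → ℕ → ℕ → ℕ → (List ℕ → List ℕ) → Bool
  | _, 0, _, _, k => econd (k [])
  | i, n + 1, s, w, k =>
    (List.range 10).all fun d =>
      !(decide (d ≤ s ∧ i * d ≤ w)) || echk (i + 1) n (s - d) (w - i * d) (fun t => k (d :: t))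

lemma echk_sound : ∀ (n i s w : ℕ) (k : List ℕ → List ℕ), echk i n s w k = true →
    ∀ L ∈ enum i n s w, econd (k L) = true := by
  intro n
  induction n with
  | zero =>
    intro i s w k hchk L hL
    simp [enum] at hL
    subst hL
    exact hchk
  | succ n ih =>
    intro i s w k hchk L hL
    rw [enum, List.mem_flatMap] at hL
    obtain ⟨d, hd, hL⟩ := hL
    by_cases hc : d ≤ s ∧ i * d ≤ w
    · rw [if_pos hc, List.mem_map] at hL
      obtain ⟨t, ht, rfl⟩ := hL
      rw [echk, List.all_eq_true] at hchk
      have := hchk d hd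
      rw [decide_eq_true hc] at this
      simp only [Bool.not_true, Bool.false_or] at this
      exact ih (i + 1) (s - d) (w - i * d) (fun t => k (d :: t)) this t ht
    · rw [if_neg hc] at hL
      simp at hL

set_option maxRecDepth 100000 in
set_option maxHeartbeats 8000000 in
theorem pcheck : allT T P = true := by decide

set_option maxRecDepth 100000 in
set_option maxHeartbeats 8000000 in
theorem echeck : ((List.range 10).all fun n => echk 0 (n + 1) 10 10 id) = true := by decide

end CVProof

open CVProof in
theorem cvseq_height_eventually_le_five (L : List ℕ) (hL : DigitString L)
    (h : AdmitsCVs L) :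
    ∃ N, ∀ n, N ≤ n → height (CVseq L n) ≤ 5 := by
  have hstep : ∀ m, CVseq L (m + 1) = CV (CVseq L m) := fun m => rfl
  have f_ne : ∀ n, CVseq L n ≠ [] := by
    intro n
    cases n with
    | zero => exact hL.1
    | succ n => rw [hstep]; exact CV_ne _
  have f_d9 : ∀ n, ∀ d ∈ CVseq L n, d ≤ 9 := by
    intro n
    cases n with
    | zero => exact hL.2
    | succ n =>
      intro d hd
      rw [hstep] at hd
      obtain ⟨i, hi⟩ := mem_CV hd
      rw [← hi]
      exact h n i
  have f_len : ∀ n, (CVseq L (n + 1)).length ≤ 10 := by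
    intro n
    rw [hstep, CV_length]
    have := maxL_le (f_d9 n)
    omega
  have f_rt : ∀ n, dec 12 (enc (CVseq L (n + 1))) = CVseq L (n + 1) := by
    intro n
    exact dec_enc _ 12 (le_trans (f_len n) (by norm_num)) (f_d9 (n + 1))
  have f_ok : ∀ n, okA (CVseq L (n + 1)) = true := by
    intro n
    rw [okA, List.all_eq_true]
    intro d hd
    exact decide_eq_true (f_d9 (n + 1) d hd)
  -- key extraction from the tree certificate
  have key : ∀ n, lk T (enc (CVseq L (n + 1))) ≠ 100 →
      (lk T (enc (CVseq L (n + 1))) = 0 →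
        height (CVseq L (n + 1)) ≤ 5 ∧ lk T (enc (CVseq L (n + 1 + 1))) = 0) ∧
      (lk T (enc (CVseq L (n + 1))) ≠ 0 →
        lk T (enc (CVseq L (n + 1 + 1))) < lk T (enc (CVseq L (n + 1))) ∧
        lk T (enc (CVseq L (n + 1))) ≤ 90) := by
    intro n hne
    have hp := lk_sound P T pcheck (enc (CVseq L (n + 1))) hne
    simp only [P] at hp
    rw [f_rt n, ← hstep (n + 1), f_ok (n + 1)] at hp
    simp only [Bool.not_true, Bool.false_or, Bool.and_eq_true, decide_eq_true_eq] at hp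
    obtain ⟨h90, hp⟩ := hp
    constructor
    · intro h0
      rw [if_pos h0] at hp
      simp only [Bool.and_eq_true, decide_eq_true_eq] at hp
      exact hp
    · intro hne0
      rw [if_neg hne0] at hp
      simp only [decide_eq_true_eq] at hp
      exact ⟨hp, h90⟩
  have zero_descend : ∀ j n, lk T (enc (CVseq L (n + 1))) = 0 →
      height (CVseq L (n + 1 + j)) ≤ 5 := by
    intro j
    induction j with
    | zero =>
      intro n h0
      exact ((key n (by rw [h0]; omega)).1 h0).1
    | succ j ih =>
      intro n h0
      have hk := (key n (by rw [h0]; omega)).1 h0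
      have := ih (n + 1) hk.2
      have heq : n + 1 + (j + 1) = n + 1 + 1 + j := by omega
      rw [heq]
      exact this
  have descend : ∀ m j n, lk T (enc (CVseq L (n + 1))) ≠ 100 →
      lk T (enc (CVseq L (n + 1))) ≤ m → m ≤ j → height (CVseq L (n + 1 + j)) ≤ 5 := by
    intro m
    induction m with
    | zero =>
      intro j n hne hle _
      have h0 : lk T (enc (CVseq L (n + 1))) = 0 := by omega
      exact zero_descend j n h0
    | succ m ih =>
      intro j n hne hle hj
      by_cases hv : lk T (enc (CVseq L (n + 1))) ≤ m
      · exact ih j n hne hv (by omega)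
      · have hv0 : lk T (enc (CVseq L (n + 1))) ≠ 0 := by omega
        have hk := (key n hne).2 hv0
        obtain ⟨j', rfl⟩ : ∃ j', j = j' + 1 := ⟨j - 1, by omega⟩
        have hne2 : lk T (enc (CVseq L (n + 1 + 1))) ≠ 100 := by omega
        have hle2 : lk T (enc (CVseq L (n + 1 + 1))) ≤ m := by omega
        have := ih j' (n + 1) hne2 hle2 (by omega)
        have heq : n + 1 + (j' + 1) = n + 1 + 1 + j' := by omega
        rw [heq]
        exact this
  -- entry: CVseq L 4 is in the tree
  have hlast : 1 ≤ (CVseq L 4).getLastD 0 := by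
    rw [hstep 3, CV_lastD]
    exact List.count_pos_iff.2 (maxL_mem (f_ne 3))
  have hsum : (CVseq L 4).sum ≤ 10 := by
    rw [hstep 3, CV_sum]
    exact f_len 2
  have hwsum : wsum 0 (CVseq L 4) ≤ 10 := by
    rw [hstep 3, CV_wsum, hstep 2, CV_sum]
    exact f_len 1
  have hl1 : 1 ≤ (CVseq L 4).length := List.length_pos_iff.2 (f_ne 4)
  have hl10 : (CVseq L 4).length ≤ 10 := f_len 3
  have hmem := mem_enum (CVseq L 4) 0 10 10 (f_d9 4) hsum hwsum
  have hech := echeck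
  rw [List.all_eq_true] at hech
  have hech2 := hech ((CVseq L 4).length - 1) (List.mem_range.2 (by omega))
  have hlen_eq : (CVseq L 4).length - 1 + 1 = (CVseq L 4).length := by omega
  rw [hlen_eq] at hech2
  have hcond := echk_sound _ 0 10 10 id hech2 (CVseq L 4) hmem
  rw [econd] at hcond
  simp only [id_eq, Bool.or_eq_true, Bool.not_eq_true', decide_eq_false_iff_not,
    decide_eq_true_eq] at hcond
  have hne100 : lk T (enc (CVseq L 4)) ≠ 100 := by
    rcases hcond with hc | hc
    · omega
    · exact hc
  refine ⟨4 + lk T (enc (CVseq L 4)), ?_⟩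
  intro n hn
  have hd := descend (lk T (enc (CVseq L 4))) (n - 4) 3 hne100 le_rfl (by omega)
  have heq : 3 + 1 + (n - 4) = n := by omega
  rwa [heq] at hd
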